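/- Let 0 < ρ < 1 and γ, ε, β, B ≥ 0. Suppose nonnegative reals (d_t)_{t≥0} satisfy d_0 = 0 and d_t ≤ γε · Σ_{k=0}^{t-1} ρ^{t-1-k} (d_k + β B ρ^k) for all t ≥ 1. Then d_t ≤ β B (ρ + γε)^t for all t ≥ 0. -/

import Mathlib

theorem stmt_2 (ρ γ ε β B : ℝ) (hρ0 : 0 < ρ) (hρ1 : ρ < 1)
    (hγ : 0 ≤ γ) (hε : 0 ≤ ε) (hβ : 0 ≤ β) (hB : 0 ≤ B)
    (d : ℕ → ℝ) (hnn : ∀ t, 0 ≤ d t) (h0 : d 0 = 0)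
    (hrec : ∀ t : ℕ, 1 ≤ t →
      d t ≤ γ * ε * ∑ k ∈ Finset.range t, ρ ^ (t - 1 - k) * (d k + β * B * ρ ^ k)) :
    ∀ t : ℕ, d t ≤ β * B * (ρ + γ * ε) ^ t := by
  set a := ρ + γ * ε with ha
  have haρ : ρ ≤ a := by nlinarith
  have ha0 : 0 ≤ a := le_trans hρ0.le haρ
  have key : ∀ t : ℕ, d t ≤ β * B * (a ^ t - ρ ^ t) := by
    intro t
    induction t using Nat.strong_induction_on with
    | _ t ih =>
      match t with
      | 0 => simp [h0]
      | (n + 1) =>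
        have h1 : d (n + 1) ≤ γ * ε *
            ∑ k ∈ Finset.range (n + 1), ρ ^ (n - k) * (d k + β * B * ρ ^ k) := by
          simpa using hrec (n + 1) (Nat.succ_le_succ (Nat.zero_le n))
        have h2 : ∀ k ∈ Finset.range (n + 1),
            ρ ^ (n - k) * (d k + β * B * ρ ^ k) ≤ ρ ^ (n - k) * (β * B * a ^ k) := by
          intro k hk
          apply mul_le_mul_of_nonneg_left _ (pow_nonneg hρ0.le _)
          have := ih k (Finset.mem_range.mp hk)
          have hρa : ρ ^ k ≤ a ^ k := pow_le_pow_left₀ hρ0.le haρ k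
          nlinarith [mul_nonneg hβ hB]
        have h3 : d (n + 1) ≤ γ * ε *
            ∑ k ∈ Finset.range (n + 1), ρ ^ (n - k) * (β * B * a ^ k) :=
          le_trans h1 (mul_le_mul_of_nonneg_left
            (Finset.sum_le_sum h2) (mul_nonneg hγ hε))
        have hgeom : (∑ k ∈ Finset.range (n + 1), a ^ k * ρ ^ (n - k)) * (a - ρ)
            = a ^ (n + 1) - ρ ^ (n + 1) := geom_sum₂_mul a ρ (n + 1)
        calc d (n + 1) ≤ γ * ε *
            ∑ k ∈ Finset.range (n + 1), ρ ^ (n - k) * (β * B * a ^ k) := h3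
          _ = β * B * ((∑ k ∈ Finset.range (n + 1), a ^ k * ρ ^ (n - k)) * (a - ρ)) := by
              rw [Finset.mul_sum, Finset.sum_mul, Finset.mul_sum]
              apply Finset.sum_congr rfl
              intro k _
              have : a - ρ = γ * ε := by rw [ha]; ring
              rw [this]; ring
          _ = β * B * (a ^ (n + 1) - ρ ^ (n + 1)) := by rw [hgeom]
  intro t
  have := key t
  have : β * B * (a ^ t - ρ ^ t) ≤ β * B * a ^ t := by
    nlinarith [mul_nonneg hβ hB, pow_nonneg hρ0.le t]
  linarith [key t]
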